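/- arXiv:1103.0465 — 3 statements merged into one kernel-verified Lean document; each statement's English description precedes it below -/
import Mathlib

section
/- For any sequences F, G in (ℝ^d)^{N+1} with F_0 = F_N = 0, the discrete Grünwald–Letnikov fractional difference operators of order α satisfy the discrete fractional integration by parts: ∑_{k=1}^{N} (Δ₋^α F)_k · G_k = ∑_{k=0}^{N-1} F_k · (Δ₊^α G)_k. -/
open Finset

/-- Generalized binomial coefficient `C^r_α = α(α−1)⋯(α−r+1)/r!`. -/
noncomputable def genBinom (α : ℝ) (r : ℕ) : ℝ :=
  (∏ i ∈ Finset.range r, (α - i)) / (Nat.factorial r)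

/-- Discrete left Grünwald–Letnikov fractional difference of order α. -/
noncomputable def glLeft {d : ℕ} (α h : ℝ) (F : ℕ → EuclideanSpace ℝ (Fin d))
    (k : ℕ) : EuclideanSpace ℝ (Fin d) :=
  (h ^ α)⁻¹ • ∑ r ∈ Finset.range (k + 1), ((-1 : ℝ) ^ r * genBinom α r) • F (k - r)

/-- Discrete right Grünwald–Letnikov fractional difference of order α. -/
noncomputable def glRight {d : ℕ} (α h : ℝ) (N : ℕ) (G : ℕ → EuclideanSpace ℝ (Fin d))
    (k : ℕ) : EuclideanSpace ℝ (Fin d) :=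
  (h ^ α)⁻¹ • ∑ r ∈ Finset.range (N - k + 1), ((-1 : ℝ) ^ r * genBinom α r) • G (k + r)

/-- Discrete fractional integration by parts (case `F₀ = F_N = 0`). -/
theorem discrete_fractional_integration_by_parts_F (d N : ℕ) (hN : 0 < N)
    (α h : ℝ) (hα0 : 0 < α) (hα1 : α < 1) (hh : 0 < h)
    (F G : ℕ → EuclideanSpace ℝ (Fin d)) (hF0 : F 0 = 0) (hFN : F N = 0) :
    ∑ k ∈ Finset.Icc 1 N, (inner ℝ (glLeft α h F k) (G k) : ℝ)
      = ∑ k ∈ Finset.range N, (inner ℝ (F k) (glRight α h N G k) : ℝ) := by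
  set w : ℕ → ℝ := fun r => (-1 : ℝ) ^ r * genBinom α r with hw
  set f : ℕ → ℕ → ℝ := fun j k => (inner ℝ (F j) (G k) : ℝ) with hf
  have hL : ∀ k, (inner ℝ (glLeft α h F k) (G k) : ℝ)
      = (h ^ α)⁻¹ * ∑ j ∈ Finset.range (k + 1), w (k - j) * f j k := by
    intro k
    rw [glLeft, real_inner_smul_left, sum_inner]
    congr 1
    rw [← Finset.sum_range_reflect]
    refine Finset.sum_congr rfl fun j hj => ?_
    rw [Finset.mem_range] at hj
    have h1 : k + 1 - 1 - j = k - j := by omega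
    have h2 : k - (k - j) = j := by omega
    rw [h1, h2, real_inner_smul_left]
  have hR : ∀ k, k ≤ N → (inner ℝ (F k) (glRight α h N G k) : ℝ)
      = (h ^ α)⁻¹ * ∑ m ∈ Finset.Icc k N, w (m - k) * f k m := by
    intro k hk
    rw [glRight, real_inner_smul_right, inner_sum]
    congr 1
    rw [show Finset.Icc k N = Finset.Ico k (N + 1) by rw [Finset.Ico_add_one_right_eq_Icc],
      Finset.sum_Ico_eq_sum_range, show N + 1 - k = N - k + 1 from by omega]
    refine Finset.sum_congr rfl fun r hr => ?_
    have h2 : k + r - k = r := by omega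
    rw [h2, real_inner_smul_right]
  have lhs_eq : ∑ k ∈ Finset.Icc 1 N, (inner ℝ (glLeft α h F k) (G k) : ℝ)
      = (h ^ α)⁻¹ * ∑ k ∈ Finset.range (N + 1),
          ∑ j ∈ Finset.range (k + 1), w (k - j) * f j k := by
    rw [Finset.mul_sum]
    rw [show Finset.range (N + 1) = insert 0 (Finset.Icc 1 N) by
      ext x; simp [Finset.mem_range, Finset.mem_Icc]; omega]
    rw [Finset.sum_insert (by simp)]
    have h0 : ∑ j ∈ Finset.range (0 + 1), w (0 - j) * f j 0 = 0 := by
      simp [hf, hF0]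
    rw [h0, mul_zero, zero_add]
    exact Finset.sum_congr rfl fun k _ => hL k
  have rhs_eq : ∑ k ∈ Finset.range N, (inner ℝ (F k) (glRight α h N G k) : ℝ)
      = (h ^ α)⁻¹ * ∑ k ∈ Finset.range (N + 1),
          ∑ m ∈ Finset.Icc k N, w (m - k) * f k m := by
    rw [Finset.mul_sum, Finset.sum_range_succ]
    have hNterm : ∑ m ∈ Finset.Icc N N, w (m - N) * f N m = 0 := by
      simp [hf, hFN]
    rw [hNterm, mul_zero, add_zero]
    refine Finset.sum_congr rfl fun k hk => ?_
    rw [Finset.mem_range] at hk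
    exact hR k (by omega)
  rw [lhs_eq, rhs_eq]
  congr 1
  rw [Finset.sum_comm' (s := Finset.range (N + 1)) (t := fun k => Finset.Icc k N)
    (t' := Finset.range (N + 1)) (s' := fun m => Finset.range (m + 1))
    (by intro x y; simp [Finset.mem_range, Finset.mem_Icc]; omega)]
end

section
/- For any sequences F, G in (ℝ^d)^{N+1} with G_0 = G_N = 0, the discrete Grünwald–Letnikov fractional difference operators of order α satisfy: ∑_{k=1}^{N} (Δ₋^α F)_k · G_k = ∑_{k=0}^{N-1} F_k · (Δ₊^α G)_k. -/
open Finset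

/-- Discrete fractional integration by parts (case `G₀ = G_N = 0`). -/
theorem discrete_fractional_integration_by_parts_G (d N : ℕ) (hN : 0 < N)
    (α h : ℝ) (hα0 : 0 < α) (hα1 : α < 1) (hh : 0 < h)
    (F G : ℕ → EuclideanSpace ℝ (Fin d)) (hG0 : G 0 = 0) (hGN : G N = 0) :
    ∑ k ∈ Finset.Icc 1 N, (inner ℝ (glLeft α h F k) (G k) : ℝ)
      = ∑ k ∈ Finset.range N, (inner ℝ (F k) (glRight α h N G k) : ℝ) := by
  set a : ℕ → ℝ := fun r => (-1 : ℝ) ^ r * genBinom α r with ha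
  -- the core bilinear term
  set f : ℕ → ℕ → ℝ := fun j m => a (m - j) * (inner ℝ (F j) (G m) : ℝ) with hf
  have L1 : ∑ k ∈ Finset.Icc 1 N, (inner ℝ (glLeft α h F k) (G k) : ℝ)
      = (h ^ α)⁻¹ * ∑ k ∈ Finset.Icc 1 N, ∑ r ∈ Finset.range (k + 1),
          a r * (inner ℝ (F (k - r)) (G k) : ℝ) := by
    simp only [glLeft, real_inner_smul_left, sum_inner, Finset.mul_sum, ha]
  have R1 : ∑ k ∈ Finset.range N, (inner ℝ (F k) (glRight α h N G k) : ℝ)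
      = (h ^ α)⁻¹ * ∑ k ∈ Finset.range N, ∑ r ∈ Finset.range (N - k + 1),
          a r * (inner ℝ (F k) (G (k + r)) : ℝ) := by
    simp only [glRight, real_inner_smul_right, inner_sum, Finset.mul_sum, ha]
  rw [L1, R1]
  congr 1
  -- rewrite the left inner sums as sums of `f`
  have Lre : ∀ k : ℕ, ∑ r ∈ Finset.range (k + 1), a r * (inner ℝ (F (k - r)) (G k) : ℝ)
      = ∑ j ∈ Finset.range (k + 1), f j k := by
    intro k
    rw [← Finset.sum_range_reflect (fun j => f j k) (k + 1)]
    refine Finset.sum_congr rfl fun r hr => ?_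
    have hr' : r ≤ k := Nat.lt_succ_iff.mp (Finset.mem_range.mp hr)
    have h1 : k + 1 - 1 - r = k - r := by omega
    have h2 : k - (k - r) = r := by omega
    simp [hf, h1, h2]
  -- rewrite the right inner sums as sums of `f`
  have Rre : ∀ k : ℕ, k ≤ N →
      ∑ r ∈ Finset.range (N - k + 1), a r * (inner ℝ (F k) (G (k + r)) : ℝ)
      = ∑ m ∈ Finset.Icc k N, f k m := by
    intro k hk
    rw [← Finset.Ico_add_one_right_eq_Icc, Finset.sum_Ico_eq_sum_range]
    have : N + 1 - k = N - k + 1 := by omega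
    rw [this]
    refine Finset.sum_congr rfl fun r hr => ?_
    simp [hf]
  calc
    ∑ k ∈ Finset.Icc 1 N, ∑ r ∈ Finset.range (k + 1),
        a r * (inner ℝ (F (k - r)) (G k) : ℝ)
        = ∑ k ∈ Finset.Icc 1 N, ∑ j ∈ Finset.range (k + 1), f j k := by
          exact Finset.sum_congr rfl fun k _ => Lre k
    _ = ∑ k ∈ Finset.range (N + 1), ∑ j ∈ Finset.range (k + 1), f j k := by
          refine Finset.sum_subset ?_ ?_
          · intro x hx
            simp only [Finset.mem_range, Finset.mem_Icc] at hx ⊢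
            omega
          · intro x hx hx'
            have hx0 : x = 0 := by
              simp only [Finset.mem_range, Finset.mem_Icc] at hx hx'
              omega
            subst hx0
            simp [hf, hG0]
    _ = ∑ j ∈ Finset.range (N + 1), ∑ k ∈ Finset.Icc j N, f j k := by
          refine Finset.sum_comm' fun x y => ?_
          simp only [Finset.mem_range, Finset.mem_Icc]
          omega
    _ = ∑ j ∈ Finset.range N, ∑ k ∈ Finset.Icc j N, f j k := by
          refine (Finset.sum_subset ?_ ?_).symm
          · intro x hx
            simp only [Finset.mem_range] at hx ⊢
            omega
          · intro x hx hx'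
            have hxN : x = N := by
              simp only [Finset.mem_range] at hx hx'
              omega
            subst hxN
            simp [hf, hGN]
    _ = ∑ k ∈ Finset.range N, ∑ r ∈ Finset.range (N - k + 1),
          a r * (inner ℝ (F k) (G (k + r)) : ℝ) := by
          refine Finset.sum_congr rfl fun k hk => ?_
          exact (Rre k (le_of_lt (Finset.mem_range.mp hk))).symm
end

section
/- Let 0 < α < 1 and L be a C² Lagrangian. Define the discrete fractional functional 𝓛⁻_h(Q) = h ∑_{k=1}^{N} L(Q_k, (Δ₋^α Q)_k, t_k) on (ℝ^d)^{N+1}. Then Q is a discrete extremal of 𝓛⁻_h (D𝓛⁻_h(Q)(W) = 0 for all W with W_0 = W_N = 0) if and only if for all k = 1,...,N−1: ∂L/∂x(Q_k, (Δ₋^α Q)_k, t_k) + (Δ₊^α(∂L/∂v(Q, Δ₋^α Q, τ)))_k = 0. -/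
open Finset
open scoped RealInnerProductSpace

section Aux

lemma glLeft_add_smul {d : ℕ} (α h : ℝ) (Q W : ℕ → EuclideanSpace ℝ (Fin d)) (ε : ℝ) (k : ℕ) :
    glLeft α h (fun j => Q j + ε • W j) k = glLeft α h Q k + ε • glLeft α h W k := by
  simp only [glLeft, smul_add]
  rw [Finset.sum_add_distrib, smul_add]
  congr 1
  rw [show (∑ r ∈ Finset.range (k+1), ((-1:ℝ)^r * genBinom α r) • (ε • W (k-r)))
      = ε • ∑ r ∈ Finset.range (k+1), ((-1:ℝ)^r * genBinom α r) • W (k-r) from by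
    rw [Finset.smul_sum]; exact Finset.sum_congr rfl fun r _ => smul_comm _ _ _]
  rw [smul_comm]

variable {E : Type*} [NormedAddCommGroup E] [InnerProductSpace ℝ E] [CompleteSpace E]

lemma inner_gradient_eq (f : E → ℝ) (x y : E) : ⟪gradient f x, y⟫ = fderiv ℝ f x y := by
  rw [gradient, InnerProductSpace.toDual_symm_apply]

set_option linter.unusedSectionVars false in
lemma rearrange (c : ℕ → ℝ) (N : ℕ) (hN : 0 < N) (G W : ℕ → E)
    (hW0 : W 0 = 0) (hWN : W N = 0) :
    (∑ k ∈ Icc 1 N, ∑ r ∈ range (k+1), c r * ⟪G k, W (k-r)⟫)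
      = ∑ j ∈ Icc 1 (N-1), ∑ r ∈ range (N-j+1), c r * ⟪G (j+r), W j⟫ := by
  have step1 : (∑ k ∈ Icc 1 N, ∑ r ∈ range (k+1), c r * ⟪G k, W (k-r)⟫)
      = ∑ k ∈ Icc 1 N, ∑ j ∈ range (k+1), c (k-j) * ⟪G k, W j⟫ := by
    refine Finset.sum_congr rfl fun k hk => ?_
    rw [← Finset.sum_range_reflect (fun j => c (k-j) * ⟪G k, W j⟫) (k+1)]
    refine Finset.sum_congr rfl fun r hr => ?_
    simp only [Finset.mem_range, Nat.lt_succ_iff] at hr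
    congr 2 <;> omega
  rw [step1]
  have step2 : (∑ k ∈ Icc 1 N, ∑ j ∈ range (k+1), c (k-j) * ⟪G k, W j⟫)
      = ∑ k ∈ Icc 1 N, ∑ j ∈ Icc 0 N, if j ≤ k then c (k-j) * ⟪G k, W j⟫ else 0 := by
    refine Finset.sum_congr rfl fun k hk => ?_
    simp only [Finset.mem_Icc] at hk
    rw [Finset.sum_ite, Finset.sum_const_zero, add_zero]
    apply Finset.sum_nbij' (fun j => j) (fun j => j) <;> intro j hj <;>
      simp_all [Finset.mem_filter, Nat.lt_succ_iff] <;> omega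
  rw [step2, Finset.sum_comm]
  rw [← Finset.sum_subset (Finset.Icc_subset_Icc (by omega) (by omega) :
        Finset.Icc 1 (N-1) ⊆ Finset.Icc 0 N)]
  · refine Finset.sum_congr rfl fun j hj => ?_
    simp only [Finset.mem_Icc] at hj
    rw [Finset.sum_ite, Finset.sum_const_zero, add_zero]
    have hfil : Finset.filter (fun k => j ≤ k) (Finset.Icc 1 N) = Finset.Icc j N := by
      ext k; simp only [Finset.mem_filter, Finset.mem_Icc]; omega
    rw [hfil, ← Finset.Ico_add_one_right_eq_Icc, Finset.sum_Ico_eq_sum_range]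
    have : N + 1 - j = N - j + 1 := by omega
    rw [this]
    refine Finset.sum_congr rfl fun r hr => ?_
    congr 2; omega
  · intro j hj hj'
    simp only [Finset.mem_Icc] at hj hj'
    have : j = 0 ∨ j = N := by omega
    rcases this with rfl | rfl <;> simp [hW0, hWN]

lemma fderiv_prod3 (L : E → E → ℝ → ℝ)
    (hf : Differentiable ℝ (fun p : E × E × ℝ => L p.1 p.2.1 p.2.2))
    (x v : E) (s : ℝ) (w c : E) :
    fderiv ℝ (fun p : E × E × ℝ => L p.1 p.2.1 p.2.2) (x, v, s) (w, c, 0)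
      = ⟪gradient (fun y => L y v s) x, w⟫ + ⟪gradient (fun u => L x u s) v, c⟫ := by
  set f := fun p : E × E × ℝ => L p.1 p.2.1 p.2.2 with hfdef
  have hfp := (hf (x, v, s)).hasFDerivAt
  have hφ1 : HasFDerivAt (fun y : E => ((y, v, s) : E × E × ℝ))
      ((ContinuousLinearMap.id ℝ E).prod 0) x :=
    (hasFDerivAt_id x).prodMk (hasFDerivAt_const (v, s) x)
  have h1 : HasFDerivAt (fun y : E => L y v s)
      ((fderiv ℝ f (x, v, s)).comp ((ContinuousLinearMap.id ℝ E).prod 0)) x := by have := hfp.comp x hφ1; exact this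
  have hφ2 : HasFDerivAt (fun u : E => ((x, u, s) : E × E × ℝ))
      ((0 : E →L[ℝ] E).prod ((ContinuousLinearMap.id ℝ E).prod 0)) v :=
    (hasFDerivAt_const x v).prodMk ((hasFDerivAt_id v).prodMk (hasFDerivAt_const s v))
  have h2 : HasFDerivAt (fun u : E => L x u s)
      ((fderiv ℝ f (x, v, s)).comp ((0 : E →L[ℝ] E).prod ((ContinuousLinearMap.id ℝ E).prod 0)))
      v := by have := hfp.comp v hφ2; exact this
  rw [inner_gradient_eq, inner_gradient_eq, h1.fderiv, h2.fderiv]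
  simp only [ContinuousLinearMap.comp_apply, ContinuousLinearMap.prod_apply,
    ContinuousLinearMap.id_apply, ContinuousLinearMap.zero_apply]
  rw [← map_add]
  congr 1
  simp [Prod.ext_iff]

end Aux

/-- The key derivative computation. -/
lemma key_hasDerivAt (d N : ℕ) (hN : 0 < N) (α : ℝ) (h : ℝ) (t : ℕ → ℝ)
    (L : EuclideanSpace ℝ (Fin d) → EuclideanSpace ℝ (Fin d) → ℝ → ℝ)
    (hL : Differentiable ℝ (fun p : EuclideanSpace ℝ (Fin d) × EuclideanSpace ℝ (Fin d) × ℝ =>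
      L p.1 p.2.1 p.2.2))
    (Q : ℕ → EuclideanSpace ℝ (Fin d))
    (W : ℕ → EuclideanSpace ℝ (Fin d)) (hW0 : W 0 = 0) (hWN : W N = 0) :
    HasDerivAt (fun ε : ℝ =>
      h * ∑ k ∈ Finset.Icc 1 N,
        L (Q k + ε • W k) (glLeft α h (fun j => Q j + ε • W j) k) (t k))
      (h * ∑ k ∈ Finset.Icc 1 (N-1),
        ⟪gradient (fun x => L x (glLeft α h Q k) (t k)) (Q k)
          + glRight α h N
              (fun j => gradient (fun v => L (Q j) v (t j)) (glLeft α h Q j)) k, W k⟫) 0 := by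
  classical
  set f := fun p : EuclideanSpace ℝ (Fin d) × EuclideanSpace ℝ (Fin d) × ℝ =>
    L p.1 p.2.1 p.2.2 with hfdef
  set B : ℕ → EuclideanSpace ℝ (Fin d) := fun k => glLeft α h Q k with hB
  set C : ℕ → EuclideanSpace ℝ (Fin d) := fun k => glLeft α h W k with hC
  set G : ℕ → EuclideanSpace ℝ (Fin d) := fun j => gradient (fun v => L (Q j) v (t j)) (B j) with hG
  set DX : ℕ → EuclideanSpace ℝ (Fin d) := fun k => gradient (fun x => L x (B k) (t k)) (Q k) with hDX
  -- rewrite the function using affinity of glLeft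
  have hfun : (fun ε : ℝ => h * ∑ k ∈ Finset.Icc 1 N,
        L (Q k + ε • W k) (glLeft α h (fun j => Q j + ε • W j) k) (t k))
      = fun ε : ℝ => h * ∑ k ∈ Finset.Icc 1 N, L (Q k + ε • W k) (B k + ε • C k) (t k) := by
    funext ε
    congr 1
    exact Finset.sum_congr rfl fun k _ => by rw [glLeft_add_smul]
  rw [hfun]
  -- per-k derivative
  have perk : ∀ k ∈ Finset.Icc 1 N,
      HasDerivAt (fun ε : ℝ => L (Q k + ε • W k) (B k + ε • C k) (t k))
        (⟪DX k, W k⟫ + ⟪G k, C k⟫) 0 := by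
    intro k _
    have hq : HasDerivAt (fun ε : ℝ => Q k + ε • W k) (W k) 0 := by
      simpa using ((hasDerivAt_id (0:ℝ)).smul_const (W k)).const_add (Q k)
    have hb : HasDerivAt (fun ε : ℝ => B k + ε • C k) (C k) 0 := by
      simpa using ((hasDerivAt_id (0:ℝ)).smul_const (C k)).const_add (B k)
    have hs : HasDerivAt (fun _ : ℝ => t k) (0:ℝ) 0 := hasDerivAt_const 0 (t k)
    have hφ : HasDerivAt (fun ε : ℝ => ((Q k + ε • W k, (B k + ε • C k, t k)) :
          EuclideanSpace ℝ (Fin d) × EuclideanSpace ℝ (Fin d) × ℝ))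
        ((W k, (C k, 0)) : EuclideanSpace ℝ (Fin d) × EuclideanSpace ℝ (Fin d) × ℝ) 0 :=
      hq.prodMk (hb.prodMk hs)
    have h0 : ((Q k + (0:ℝ) • W k, (B k + (0:ℝ) • C k, t k)) :
          EuclideanSpace ℝ (Fin d) × EuclideanSpace ℝ (Fin d) × ℝ)
        = (Q k, (B k, t k)) := by simp
    have hder := (hL _).hasFDerivAt.comp_hasDerivAt 0 hφ
    rw [h0] at hder
    have := hder
    rw [show fderiv ℝ f (Q k, B k, t k) ((W k, (C k, 0)) :
          EuclideanSpace ℝ (Fin d) × EuclideanSpace ℝ (Fin d) × ℝ)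
        = ⟪DX k, W k⟫ + ⟪G k, C k⟫ from fderiv_prod3 L hL (Q k) (B k) (t k) (W k) (C k)] at this
    exact this
  have hsum := (HasDerivAt.fun_sum perk).const_mul h
  refine hsum.congr_deriv (Eq.symm ?_)
  -- now prove the value equality
  congr 1
  rw [Finset.sum_add_distrib]
  have partA : (∑ k ∈ Finset.Icc 1 N, ⟪DX k, W k⟫)
      = ∑ k ∈ Finset.Icc 1 (N-1), ⟪DX k, W k⟫ := by
    rw [← Finset.sum_subset (Finset.Icc_subset_Icc le_rfl (by omega) :
          Finset.Icc 1 (N-1) ⊆ Finset.Icc 1 N)]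
    intro j hj hj'
    simp only [Finset.mem_Icc] at hj hj'
    have : j = N := by omega
    subst this
    simp [hWN]
  have partB : (∑ k ∈ Finset.Icc 1 N, ⟪G k, C k⟫)
      = ∑ k ∈ Finset.Icc 1 (N-1), ⟪glRight α h N G k, W k⟫ := by
    have l1 : ∀ k, ⟪G k, C k⟫
        = (h ^ α)⁻¹ * ∑ r ∈ range (k+1), ((-1:ℝ)^r * genBinom α r) * ⟪G k, W (k-r)⟫ := by
      intro k
      simp only [hC, glLeft, real_inner_smul_right, inner_sum]
    have l2 : ∀ k, ⟪glRight α h N G k, W k⟫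
        = (h ^ α)⁻¹ * ∑ r ∈ range (N-k+1), ((-1:ℝ)^r * genBinom α r) * ⟪G (k+r), W k⟫ := by
      intro k
      simp only [glRight, real_inner_smul_left, sum_inner]
    simp only [l1, l2]
    rw [← Finset.mul_sum, ← Finset.mul_sum]
    congr 1
    exact rearrange (fun r => (-1:ℝ)^r * genBinom α r) N hN G W hW0 hWN
  rw [partA, partB, ← Finset.sum_add_distrib]
  exact Finset.sum_congr rfl fun k _ => by rw [inner_add_left]

/-- Discrete fractional variational principle: `Q` is a discrete extremal of
`𝓛⁻_h(Q) = h ∑_{k=1}^N L(Q_k, (Δ₋^α Q)_k, t_k)` iff it satisfies the discrete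
fractional Euler–Lagrange equation
`∂L/∂x(Q_k, (Δ₋^α Q)_k, t_k) + (Δ₊^α(∂L/∂v(Q, Δ₋^α Q, τ)))_k = 0`, `k = 1,…,N−1`. -/
theorem discrete_fractional_variational_principle (d N : ℕ) (hN : 0 < N)
    (a b : ℝ) (hab : a < b) (α : ℝ) (hα0 : 0 < α) (hα1 : α < 1)
    (h : ℝ) (hh : h = (b - a) / N) (t : ℕ → ℝ) (ht : ∀ k, t k = a + k * h)
    (L : EuclideanSpace ℝ (Fin d) → EuclideanSpace ℝ (Fin d) → ℝ → ℝ)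
    (hL : ContDiff ℝ 2 (fun p : EuclideanSpace ℝ (Fin d) × EuclideanSpace ℝ (Fin d) × ℝ =>
      L p.1 p.2.1 p.2.2))
    (Q : ℕ → EuclideanSpace ℝ (Fin d)) :
    (∀ W : ℕ → EuclideanSpace ℝ (Fin d), W 0 = 0 → W N = 0 →
        HasDerivAt (fun ε : ℝ =>
          h * ∑ k ∈ Finset.Icc 1 N,
            L (Q k + ε • W k) (glLeft α h (fun j => Q j + ε • W j) k) (t k)) 0 0)
      ↔ ∀ k ∈ Finset.Icc 1 (N - 1),
          gradient (fun x => L x (glLeft α h Q k) (t k)) (Q k)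
            + glRight α h N
                (fun j => gradient (fun v => L (Q j) v (t j)) (glLeft α h Q j)) k = 0 := by
  classical
  have hdiff : Differentiable ℝ
      (fun p : EuclideanSpace ℝ (Fin d) × EuclideanSpace ℝ (Fin d) × ℝ =>
        L p.1 p.2.1 p.2.2) := hL.differentiable (by norm_num)
  have hpos : 0 < h := by
    rw [hh]
    exact div_pos (by linarith) (by exact_mod_cast hN)
  set EL : ℕ → EuclideanSpace ℝ (Fin d) := fun k =>
    gradient (fun x => L x (glLeft α h Q k) (t k)) (Q k)
      + glRight α h N (fun j => gradient (fun v => L (Q j) v (t j)) (glLeft α h Q j)) k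
    with hEL
  constructor
  · intro hyp k hk
    have hk' := Finset.mem_Icc.mp hk
    set W : ℕ → EuclideanSpace ℝ (Fin d) := fun j => if j = k then EL k else 0 with hW
    have hW0 : W 0 = 0 := by simp only [hW]; rw [if_neg (by omega)]
    have hWN : W N = 0 := by simp only [hW]; rw [if_neg (by omega)]
    have hkey := key_hasDerivAt d N hN α h t L hdiff Q W hW0 hWN
    have huniq := (hyp W hW0 hWN).unique hkey
    have hsum : (∑ j ∈ Finset.Icc 1 (N-1), ⟪EL j, W j⟫) = ⟪EL k, EL k⟫ := by
      rw [Finset.sum_eq_single_of_mem k hk (fun j _ hjk => by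
        simp [hW, if_neg hjk])]
      simp [hW]
    rw [hsum] at huniq
    have hz : ⟪EL k, EL k⟫ = 0 := by
      rcases mul_eq_zero.mp huniq.symm with h' | h'
      · exact absurd h' (ne_of_gt hpos)
      · exact h'
    exact inner_self_eq_zero.mp hz
  · intro hEuler W hW0 hWN
    have hkey := key_hasDerivAt d N hN α h t L hdiff Q W hW0 hWN
    convert hkey using 1
    rw [show (∑ k ∈ Finset.Icc 1 (N-1), ⟪EL k, W k⟫) = 0 from
      Finset.sum_eq_zero fun k hk => by
        rw [show EL k = 0 from hEuler k hk, inner_zero_left]]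
    ring
end
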